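/- Let G be a group generated by elements a_1,…,a_m (m ≥ 2). Suppose that for some real g > 0 and integers ℓ_0 ≥ 1 and ℓ_1 ≥ 100ℓ_0 one has |B_{ℓ_0}| ≤ (2m−1)^{1.2·g·ℓ_0} and |B_{ℓ_1}| ≥ (2m−1)^{g·ℓ_1}. Let a be an integer with 1 ≤ a ≤ ℓ_0. Then there exists an integer ℓ with 0.65·ℓ_1 ≤ ℓ ≤ ℓ_1 such that |B_ℓ| ≥ (2m−1)^{g·ℓ} and |B_ℓ| ≥ (2m−1)^{g·a/2}·|B_{ℓ−a}|. -/
import Mathlib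


open Filter Set

namespace GrowthRQ

variable {G : Type*} [Group G] {m : ℕ}

/-- Word norm with respect to the generators `gen i` and their inverses. -/
noncomputable def wordNorm (gen : Fin m → G) (x : G) : ℕ :=
  sInf {n | ∃ w : List (Fin m × Bool), w.length = n ∧
    (w.map (fun p => if p.2 then gen p.1 else (gen p.1)⁻¹)).prod = x}

/-- Ball of (real) radius `r` for the word norm. -/
def ball (gen : Fin m → G) (r : ℝ) : Set G := {x | (wordNorm gen x : ℝ) ≤ r}

/-- Annulus of elements of norm in `(ℓ - a, ℓ]`. -/
def ann (gen : Fin m → G) (ℓ a : ℝ) : Set G := ball gen ℓ \ ball gen (ℓ - a)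

/-- Growth exponent in base `2m-1`. (The limit exists by submultiplicativity,
so it equals the `limsup`.) -/
noncomputable def growthExponent (gen : Fin m → G) : ℝ :=
  Filter.limsup (fun L : ℕ => Real.logb (2 * (m : ℝ) - 1) ((ball gen L).ncard) / L) Filter.atTop

/-- Gromov product with origin `e`. -/
noncomputable def gromov (gen : Fin m → G) (x y : G) : ℝ :=
  ((wordNorm gen x : ℝ) + (wordNorm gen y : ℝ) - (wordNorm gen (x⁻¹ * y) : ℝ)) / 2

/-- `δ`-hyperbolicity via the Gromov product. -/
def IsHyperbolic (gen : Fin m → G) (δ : ℝ) : Prop :=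
  ∀ x y z : G, gromov gen x z ≥ min (gromov gen x y) (gromov gen y z) - δ

/-- Non-elementary: not virtually cyclic. -/
def NonElementary (G : Type*) [Group G] : Prop :=
  ¬ ∃ H : Subgroup G, H.index ≠ 0 ∧ IsCyclic H

/-- Probability, for `N` independent uniform choices of relators in the ball of radius `ℓ`,
that the chosen tuple satisfies `P`. -/
noncomputable def quotProb (gen : Fin m → G) (ℓ N : ℕ) (P : (Fin N → G) → Prop) : ℝ :=
  (({r : Fin N → G | (∀ i, r i ∈ ball gen (ℓ : ℝ)) ∧ P r}).ncard : ℝ) /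
  (({r : Fin N → G | ∀ i, r i ∈ ball gen (ℓ : ℝ)}).ncard : ℝ)

/-- Images of the generators in the quotient by the normal closure of the relators. -/
noncomputable def quotGen (gen : Fin m → G) {N : ℕ} (r : Fin N → G) :
    Fin m → G ⧸ Subgroup.normalClosure (Set.range r) :=
  fun i => QuotientGroup.mk (gen i)


open Pointwise

abbrev lett (gen : Fin m → G) : Fin m × Bool → G :=
  fun p => if p.2 then gen p.1 else (gen p.1)⁻¹

lemma prod_reverse_neg (gen : Fin m → G) (w : List (Fin m × Bool)) :
    (((w.reverse.map fun p => (p.1, !p.2)).map (lett gen))).prod = ((w.map (lett gen)).prod)⁻¹ := by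
  induction w with
  | nil => simp
  | cons p w ih =>
    obtain ⟨i, b⟩ := p
    simp only [List.map_reverse, List.map_map] at ih ⊢
    cases b <;> simp [lett, ih, mul_inv_rev]

lemma exists_word (gen : Fin m → G) (hgen : Subgroup.closure (Set.range gen) = ⊤) (x : G) :
    ∃ w : List (Fin m × Bool), (w.map (lett gen)).prod = x := by
  have hx : x ∈ Subgroup.closure (Set.range gen) := hgen ▸ Subgroup.mem_top x
  induction hx using Subgroup.closure_induction with
  | mem y hy =>
    obtain ⟨i, rfl⟩ := hy
    exact ⟨[(i, true)], by simp [lett]⟩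
  | one => exact ⟨[], by simp⟩
  | mul y z _ _ ihy ihz =>
    obtain ⟨w1, h1⟩ := ihy; obtain ⟨w2, h2⟩ := ihz
    exact ⟨w1 ++ w2, by simp [h1, h2]⟩
  | inv y _ ihy =>
    obtain ⟨w, h⟩ := ihy
    exact ⟨(w.reverse.map fun p => (p.1, !p.2)), by rw [prod_reverse_neg, h]⟩

lemma wordNorm_spec (gen : Fin m → G) (hgen : Subgroup.closure (Set.range gen) = ⊤) (x : G) :
    ∃ w : List (Fin m × Bool), w.length = wordNorm gen x ∧ (w.map (lett gen)).prod = x := by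
  obtain ⟨w, hw⟩ := exists_word gen hgen x
  have hne : {n | ∃ w : List (Fin m × Bool), w.length = n ∧
      (w.map (lett gen)).prod = x}.Nonempty := ⟨w.length, w, rfl, hw⟩
  exact Nat.sInf_mem hne

lemma wordNorm_le (gen : Fin m → G) (w : List (Fin m × Bool)) :
    wordNorm gen ((w.map (lett gen)).prod) ≤ w.length :=
  Nat.sInf_le ⟨w, rfl, rfl⟩

lemma mem_ball_iff (gen : Fin m → G) (x : G) (n : ℕ) :
    x ∈ ball gen (n : ℝ) ↔ wordNorm gen x ≤ n := by
  simp [ball, Nat.cast_le]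

lemma one_mem_ball (gen : Fin m → G) (n : ℕ) : (1 : G) ∈ ball gen (n : ℝ) := by
  rw [mem_ball_iff]
  have := wordNorm_le gen []
  simpa using this.trans (Nat.zero_le n)

lemma ball_mono (gen : Fin m → G) {r r' : ℝ} (h : r ≤ r') : ball gen r ⊆ ball gen r' :=
  fun _ hx => le_trans hx h

lemma ball_add_subset (gen : Fin m → G) (hgen : Subgroup.closure (Set.range gen) = ⊤)
    (s t : ℕ) : ball gen ((s + t : ℕ) : ℝ) ⊆ ball gen (s : ℝ) * ball gen (t : ℝ) := by
  intro x hx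
  rw [mem_ball_iff] at hx
  obtain ⟨w, hlen, hw⟩ := wordNorm_spec gen hgen x
  refine ⟨((w.take s).map (lett gen)).prod, ?_, ((w.drop s).map (lett gen)).prod, ?_, ?_⟩
  · rw [mem_ball_iff]
    refine (wordNorm_le gen _).trans ?_
    simp [List.length_take]
  · rw [mem_ball_iff]
    refine (wordNorm_le gen _).trans ?_
    simp only [List.length_drop]
    omega
  · show ((w.take s).map (lett gen)).prod * ((w.drop s).map (lett gen)).prod = x
    rw [← List.prod_append, ← List.map_append, List.take_append_drop, hw]

lemma ncard_ball_mul (gen : Fin m → G) (hgen : Subgroup.closure (Set.range gen) = ⊤)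
    (s t : ℕ) (hs : (ball gen (s : ℝ)).Finite) (ht : (ball gen (t : ℝ)).Finite) :
    (ball gen ((s + t : ℕ) : ℝ)).ncard ≤ (ball gen (s : ℝ)).ncard * (ball gen (t : ℝ)).ncard := by
  calc (ball gen ((s + t : ℕ) : ℝ)).ncard
      ≤ (ball gen (s : ℝ) * ball gen (t : ℝ)).ncard :=
        Set.ncard_le_ncard (ball_add_subset gen hgen s t) (hs.mul ht)
    _ ≤ _ := Set.natCard_mul_le

lemma ball_zero_subset (gen : Fin m → G) (hgen : Subgroup.closure (Set.range gen) = ⊤) :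
    ball gen ((0 : ℕ) : ℝ) ⊆ {1} := by
  intro x hx
  rw [mem_ball_iff] at hx
  obtain ⟨w, hlen, hw⟩ := wordNorm_spec gen hgen x
  have hwnil : w = [] := List.length_eq_zero_iff.mp (by omega)
  subst hwnil
  simp only [List.map_nil, List.prod_nil] at hw
  simp [← hw]

set_option maxHeartbeats 1000000 in
/-- if `|B_{ℓ₀}| ≤ (2m-1)^{1.2 g ℓ₀}` and `|B_{ℓ₁}| ≥ (2m-1)^{g ℓ₁}` with
`ℓ₁ ≥ 100 ℓ₀`, then for any `1 ≤ a ≤ ℓ₀` there exists `0.65 ℓ₁ ≤ ℓ ≤ ℓ₁` with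
`|B_ℓ| ≥ (2m-1)^{g ℓ}` and `|B_ℓ| ≥ (2m-1)^{g a / 2} |B_{ℓ-a}|`. -/
theorem statement12 {G : Type*} [Group G] {m : ℕ} (hm : 2 ≤ m) (gen : Fin m → G)
    (hgen : Subgroup.closure (Set.range gen) = ⊤)
    (g : ℝ) (hg : 0 < g)
    (ℓ₀ ℓ₁ : ℕ) (hℓ₀ : 1 ≤ ℓ₀) (hℓ₁ : 100 * ℓ₀ ≤ ℓ₁)
    (h0 : ((ball gen ℓ₀).ncard : ℝ) ≤ (2 * (m : ℝ) - 1) ^ (1.2 * g * ℓ₀))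
    (h1 : ((ball gen ℓ₁).ncard : ℝ) ≥ (2 * (m : ℝ) - 1) ^ (g * ℓ₁))
    (a : ℕ) (ha1 : 1 ≤ a) (ha : a ≤ ℓ₀) :
    ∃ ℓ : ℕ, 0.65 * (ℓ₁ : ℝ) ≤ (ℓ : ℝ) ∧ ℓ ≤ ℓ₁ ∧
      ((ball gen ℓ).ncard : ℝ) ≥ (2 * (m : ℝ) - 1) ^ (g * ℓ) ∧
      ((ball gen ℓ).ncard : ℝ) ≥
        (2 * (m : ℝ) - 1) ^ (g * a / 2) * ((ball gen ((ℓ : ℝ) - a)).ncard : ℝ) := by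
  set q : ℝ := 2 * (m : ℝ) - 1 with hqdef
  have hm' : (2 : ℝ) ≤ (m : ℝ) := by exact_mod_cast hm
  have hq3 : (3 : ℝ) ≤ q := by rw [hqdef]; linarith
  have hq1 : (1 : ℝ) < q := by linarith
  have hq0 : (0 : ℝ) < q := by linarith
  -- finiteness
  have hfin1 : (ball gen (ℓ₁ : ℝ)).Finite := by
    apply Set.finite_of_ncard_ne_zero
    intro h
    rw [h] at h1
    exact (Real.rpow_pos_of_pos hq0 (g * ℓ₁)).not_ge (by exact_mod_cast h1)
  have hℓ₁pos : 100 ≤ ℓ₁ := by omega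
  have hf1 : (ball gen ((1 : ℕ) : ℝ)).Finite :=
    hfin1.subset (ball_mono gen (by exact_mod_cast (by omega : 1 ≤ ℓ₁)))
  have hfin : ∀ n : ℕ, (ball gen (n : ℝ)).Finite := by
    intro n
    induction n with
    | zero => exact hf1.subset (ball_mono gen (by norm_num))
    | succ n ih => exact (ih.mul hf1).subset (ball_add_subset gen hgen n 1)
  have Bmono : ∀ {s t : ℕ}, s ≤ t → (ball gen (s : ℝ)).ncard ≤ (ball gen (t : ℝ)).ncard :=
    fun {s t} h => Set.ncard_le_ncard (ball_mono gen (by exact_mod_cast h)) (hfin t)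
  -- submultiplicativity power bound
  have Bpow : ∀ n : ℕ, (ball gen ((n * ℓ₀ : ℕ) : ℝ)).ncard ≤ (ball gen (ℓ₀ : ℝ)).ncard ^ n := by
    intro n
    induction n with
    | zero =>
      simpa using Set.ncard_le_ncard (ball_zero_subset gen hgen) (Set.finite_singleton 1)
    | succ n ih =>
      calc (ball gen (((n + 1) * ℓ₀ : ℕ) : ℝ)).ncard
          = (ball gen ((n * ℓ₀ + ℓ₀ : ℕ) : ℝ)).ncard := by ring_nf
        _ ≤ (ball gen ((n * ℓ₀ : ℕ) : ℝ)).ncard * (ball gen (ℓ₀ : ℝ)).ncard :=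
            ncard_ball_mul gen hgen _ _ (hfin _) (hfin _)
        _ ≤ (ball gen (ℓ₀ : ℝ)).ncard ^ n * (ball gen (ℓ₀ : ℝ)).ncard :=
            Nat.mul_le_mul_right _ ih
        _ = (ball gen (ℓ₀ : ℝ)).ncard ^ (n + 1) := (pow_succ _ _).symm
  -- universal upper bound
  have hBup : ∀ ℓ : ℕ, ((ball gen (ℓ : ℝ)).ncard : ℝ) ≤ q ^ (1.2 * g * ((ℓ : ℝ) + ℓ₀)) := by
    intro ℓ
    set n := ℓ / ℓ₀ + 1 with hn
    have hnm : n * ℓ₀ = ℓ / ℓ₀ * ℓ₀ + ℓ₀ := by rw [hn]; ring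
    have hd1 := Nat.div_add_mod' ℓ ℓ₀
    have hd2 := Nat.mod_lt ℓ (show 0 < ℓ₀ by omega)
    have h1' : ℓ ≤ n * ℓ₀ := by omega
    have h2' : n * ℓ₀ ≤ ℓ + ℓ₀ := by
      have := Nat.div_mul_le_self ℓ ℓ₀
      omega
    calc ((ball gen (ℓ : ℝ)).ncard : ℝ)
        ≤ ((ball gen ((n * ℓ₀ : ℕ) : ℝ)).ncard : ℝ) := by exact_mod_cast Bmono h1'
      _ ≤ ((ball gen (ℓ₀ : ℝ)).ncard : ℝ) ^ n := by exact_mod_cast Bpow n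
      _ ≤ (q ^ (1.2 * g * ℓ₀)) ^ n := pow_le_pow_left₀ (by positivity) h0 n
      _ = q ^ (1.2 * g * (ℓ₀ : ℝ) * n) := by
          rw [← Real.rpow_natCast (q ^ (1.2 * g * (ℓ₀ : ℝ))) n, ← Real.rpow_mul hq0.le]
      _ ≤ q ^ (1.2 * g * ((ℓ : ℝ) + ℓ₀)) := by
          apply Real.rpow_le_rpow_of_exponent_le hq1.le
          have hc : ((n : ℝ) * ℓ₀) ≤ (ℓ : ℝ) + ℓ₀ := by exact_mod_cast h2'
          nlinarith [hg.le]
  by_contra hcon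
  push_neg at hcon
  -- the descent
  have claim : ∀ k : ℕ, (k : ℝ) * a ≤ 0.35 * ℓ₁ →
      q ^ (g * ((ℓ₁ - k * a : ℕ) : ℝ) + k * (g * a / 2))
        ≤ ((ball gen ((ℓ₁ - k * a : ℕ) : ℝ)).ncard : ℝ) := by
    intro k
    induction k with
    | zero =>
      intro _
      simpa using h1
    | succ k ih =>
      intro hk1
      have ha0 : (0 : ℝ) < (a : ℝ) := by exact_mod_cast ha1
      have hk : (k : ℝ) * a ≤ 0.35 * ℓ₁ := by push_cast at hk1 ⊢; nlinarith
      have hka_nat : (k + 1) * a ≤ ℓ₁ := by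
        have : ((k + 1 : ℕ) : ℝ) * a ≤ (ℓ₁ : ℝ) := by
          push_cast at hk1 ⊢
          nlinarith [(Nat.cast_nonneg ℓ₁ : (0:ℝ) ≤ (ℓ₁:ℝ))]
        exact_mod_cast (by push_cast at this ⊢; exact this : (((k+1)*a : ℕ) : ℝ) ≤ (ℓ₁ : ℝ))
      have hmul : (k + 1) * a = k * a + a := by ring
      have hka : k * a ≤ ℓ₁ := by omega
      set ℓ : ℕ := ℓ₁ - k * a with hℓdef
      have hcast : (ℓ : ℝ) = (ℓ₁ : ℝ) - (k : ℝ) * a := by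
        rw [hℓdef]; push_cast [Nat.cast_sub hka]; ring
      have IH := ih hk
      have hexp0 : (0 : ℝ) ≤ (k : ℝ) * (g * a / 2) := by positivity
      have hR : ((ball gen (ℓ : ℝ)).ncard : ℝ) ≥ q ^ (g * (ℓ : ℝ)) := by
        refine le_trans (Real.rpow_le_rpow_of_exponent_le hq1.le (by linarith)) IH
      have hl_lo : 0.65 * (ℓ₁ : ℝ) ≤ (ℓ : ℝ) := by rw [hcast]; nlinarith [(Nat.cast_nonneg ℓ₁ : (0:ℝ) ≤ (ℓ₁:ℝ))]
      have hl_hi : ℓ ≤ ℓ₁ := Nat.sub_le _ _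
      have hlt := hcon ℓ hl_lo hl_hi hR
      have haℓ : a ≤ ℓ := by omega
      have hsub : (ℓ : ℝ) - a = ((ℓ - a : ℕ) : ℝ) := by push_cast [Nat.cast_sub haℓ]; ring
      rw [hsub] at hlt
      have hstep : ℓ - a = ℓ₁ - (k + 1) * a := by omega
      rw [hstep] at hlt
      -- now: (B ℓ) < q^(ga/2) * B(ℓ₁-(k+1)a), and q^(gℓ + k ga/2) ≤ B ℓ
      have hkey : q ^ (g * (ℓ : ℝ) + k * (g * a / 2)) <
          q ^ (g * a / 2) * ((ball gen ((ℓ₁ - (k + 1) * a : ℕ) : ℝ)).ncard : ℝ) :=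
        lt_of_le_of_lt IH hlt
      have hcast2 : ((ℓ₁ - (k + 1) * a : ℕ) : ℝ) = (ℓ₁ : ℝ) - ((k : ℝ) + 1) * a := by
        push_cast [Nat.cast_sub hka_nat]; ring
      have hE : g * ((ℓ₁ - (k + 1) * a : ℕ) : ℝ) + ((k : ℕ) + 1 : ℕ) * (g * a / 2)
          = (g * (ℓ : ℝ) + k * (g * a / 2)) - g * a / 2 := by
        rw [hcast2, hcast]; push_cast; ring
      rw [hE, Real.rpow_sub hq0]
      rw [div_le_iff₀ (Real.rpow_pos_of_pos hq0 _)]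
      calc q ^ (g * (ℓ : ℝ) + k * (g * a / 2))
          ≤ q ^ (g * a / 2) * ((ball gen ((ℓ₁ - (k + 1) * a : ℕ) : ℝ)).ncard : ℝ) := hkey.le
        _ = ((ball gen ((ℓ₁ - (k + 1) * a : ℕ) : ℝ)).ncard : ℝ) * q ^ (g * a / 2) := by ring
  -- choose maximal k
  obtain ⟨k, hk1, hk2⟩ : ∃ k : ℕ, k * (20 * a) ≤ 7 * ℓ₁ ∧ 7 * ℓ₁ < (k + 1) * (20 * a) := by
    refine ⟨7 * ℓ₁ / (20 * a), Nat.div_mul_le_self _ _, ?_⟩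
    have hd1 := Nat.div_add_mod' (7 * ℓ₁) (20 * a)
    have hd2 := Nat.mod_lt (7 * ℓ₁) (show 0 < 20 * a by omega)
    have hmul : (7 * ℓ₁ / (20 * a) + 1) * (20 * a) = 7 * ℓ₁ / (20 * a) * (20 * a) + 20 * a := by
      ring
    omega
  have hkR : (k : ℝ) * a ≤ 0.35 * ℓ₁ := by
    have : ((k * (20 * a) : ℕ) : ℝ) ≤ ((7 * ℓ₁ : ℕ) : ℝ) := by exact_mod_cast hk1
    push_cast at this
    nlinarith
  have hkR2 : 0.35 * (ℓ₁ : ℝ) < (k : ℝ) * a + a := by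
    have : ((7 * ℓ₁ : ℕ) : ℝ) < (((k + 1) * (20 * a) : ℕ) : ℝ) := by exact_mod_cast hk2
    push_cast at this
    nlinarith
  have hC := claim k hkR
  have hka : k * a ≤ ℓ₁ := by
    have : (k : ℝ) * a ≤ (ℓ₁ : ℝ) := by nlinarith [(Nat.cast_nonneg ℓ₁ : (0:ℝ) ≤ (ℓ₁:ℝ))]
    exact_mod_cast (by push_cast; exact this : ((k * a : ℕ) : ℝ) ≤ (ℓ₁ : ℝ))
  set ℓ : ℕ := ℓ₁ - k * a with hℓdef
  have hcast : (ℓ : ℝ) = (ℓ₁ : ℝ) - (k : ℝ) * a := by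
    rw [hℓdef]; push_cast [Nat.cast_sub hka]; ring
  have hup := hBup ℓ
  have hcomb : q ^ (g * (ℓ : ℝ) + k * (g * a / 2)) ≤ q ^ (1.2 * g * ((ℓ : ℝ) + ℓ₀)) :=
    le_trans hC hup
  have hexp := (Real.rpow_le_rpow_left_iff hq1).mp hcomb
  -- divide by g and derive contradiction
  have hdiv : (ℓ : ℝ) + (k : ℝ) * a / 2 ≤ 1.2 * ((ℓ : ℝ) + ℓ₀) := by
    have h' : g * ((ℓ : ℝ) + (k : ℝ) * a / 2) ≤ g * (1.2 * ((ℓ : ℝ) + ℓ₀)) := by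
      nlinarith [hexp]
    exact le_of_mul_le_mul_left h' hg
  have hℓ₀R : (1 : ℝ) ≤ (ℓ₀ : ℝ) := by exact_mod_cast hℓ₀
  have hℓ₁R : 100 * (ℓ₀ : ℝ) ≤ (ℓ₁ : ℝ) := by exact_mod_cast hℓ₁
  have haR : (a : ℝ) ≤ (ℓ₀ : ℝ) := by exact_mod_cast ha
  rw [hcast] at hdiv
  linarith

end GrowthRQ
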